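/- Let R be a reduced commutative unital ring and f ∈ R[x] a regular element. If g ∈ R[x] divides f, then deg(g) ≤ deg(f). In particular, every divisor of a regular constant element of R[x] is a constant. -/

import Mathlib

open Polynomial

lemma ann_of_mem_minimalPrime {R : Type*} [CommRing R] [IsReduced R] {p : Ideal R}
    (hp : p ∈ minimalPrimes R) {x : R} (hx : x ∈ p) : ∃ s ∉ p, s * x = 0 := by
  haveI : p.IsPrime := hp.1.1
  have h1 : IsNilpotent (algebraMap R (Localization p.primeCompl) x) := by
    have hmem : algebraMap R (Localization p.primeCompl) x ∈
        (Ideal.map (algebraMap R (Localization p.primeCompl)) (⊥ : Ideal R)).radical := by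
      rw [IsLocalization.AtPrime.radical_map_of_mem_minimalPrimes
        (A := Localization p.primeCompl) p ⊥ hp]
      exact Ideal.mem_map_of_mem _ hx
    rw [Ideal.map_bot] at hmem
    obtain ⟨n, hn⟩ := hmem
    exact ⟨n, by simpa using hn⟩
  have h2 : algebraMap R (Localization p.primeCompl) x = 0 := h1.eq_zero
  obtain ⟨m, hm⟩ := (IsLocalization.map_eq_zero_iff p.primeCompl _ x).mp h2
  exact ⟨m, m.2, hm⟩

lemma ann_poly_of_mem_minimalPrime {R : Type*} [CommRing R] [IsReduced R] {p : Ideal R}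
    (hp : p ∈ minimalPrimes R) {f : R[X]} (hf : ∀ n, f.coeff n ∈ p) :
    ∃ s ∉ p, C s * f = 0 := by
  haveI : p.IsPrime := hp.1.1
  choose t ht ht0 using fun n => ann_of_mem_minimalPrime hp (hf n)
  refine ⟨∏ n ∈ Finset.range (f.natDegree + 1), t n, ?_, ?_⟩
  · intro hmem
    obtain ⟨n, -, hn⟩ := Ideal.IsPrime.prod_mem_iff.mp hmem
    exact ht n hn
  · ext n
    simp only [coeff_C_mul, coeff_zero]
    by_cases hn : n ≤ f.natDegree
    · rw [← Finset.mul_prod_erase _ _ (Finset.mem_range.mpr (Nat.lt_succ_of_le hn))]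
      rw [mul_comm (t n), mul_assoc, ht0 n, mul_zero]
    · rw [f.coeff_eq_zero_of_natDegree_lt (lt_of_not_ge hn), mul_zero]

open Polynomial in
theorem stmt_7 {R : Type*} [CommRing R] [IsReduced R] (f : R[X])
    (hf : f ∈ nonZeroDivisors R[X]) :
    (∀ g : R[X], g ∣ f → g.degree ≤ f.degree) ∧
      (∀ a : R, f = Polynomial.C a → ∀ g : R[X], g ∣ f → ∃ b : R, g = Polynomial.C b) := by
  have key : ∀ g : R[X], g ∣ f → g.degree ≤ f.degree := by
    rintro g ⟨h, rfl⟩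
    by_cases hg : g = 0
    · simp [hg]
    -- the leading coefficient of g is not nilpotent, hence avoids some minimal prime
    have ha : ¬ IsNilpotent g.leadingCoeff := by
      intro hnil
      exact leadingCoeff_ne_zero.mpr hg (hnil.eq_zero)
    rw [nilpotent_iff_mem_prime] at ha
    push_neg at ha
    obtain ⟨J, hJ, haJ⟩ := ha
    haveI := hJ
    obtain ⟨p, hpmin, hpJ⟩ := Ideal.exists_minimalPrimes_le (I := ⊥) (J := J) bot_le
    have hpmin' : p ∈ minimalPrimes R := hpmin
    haveI : p.IsPrime := hpmin'.1.1
    have hap : g.leadingCoeff ∉ p := fun hmem => haJ (hpJ hmem)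
    set φ := Ideal.Quotient.mk p
    have hgmap : (g.map φ).degree = g.degree := by
      apply degree_map_eq_of_leadingCoeff_ne_zero
      simpa [φ, Ideal.Quotient.eq_zero_iff_mem] using hap
    have hgne : g.map φ ≠ 0 := by
      intro h0
      rw [← degree_eq_bot, hgmap, degree_eq_bot] at h0
      exact hg h0
    have hhne : h.map φ ≠ 0 := by
      intro h0
      have hmapzero : (g * h).map φ = 0 := by rw [Polynomial.map_mul, h0, mul_zero]
      have hcoeff : ∀ n, (g * h).coeff n ∈ p := by
        intro n
        have h2 := congrArg (fun q => q.coeff n) hmapzero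
        simp only [coeff_map, coeff_zero] at h2
        exact Ideal.Quotient.eq_zero_iff_mem.mp h2
      obtain ⟨s, hs, hs0⟩ := ann_poly_of_mem_minimalPrime hpmin' hcoeff
      have : (C s : R[X]) = 0 := hf.2 _ hs0
      exact hs (by simpa [φ, ← C_eq_zero.mp this] using p.zero_mem)
    calc g.degree = (g.map φ).degree := hgmap.symm
      _ ≤ (g.map φ).degree + (h.map φ).degree :=
            le_add_of_nonneg_right (zero_le_degree_iff.mpr hhne)
      _ = ((g * h).map φ).degree := by rw [Polynomial.map_mul, degree_mul]
      _ ≤ (g * h).degree := degree_map_le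
  refine ⟨key, fun a ha g hg => ?_⟩
  refine ⟨g.coeff 0, eq_C_of_degree_le_zero ?_⟩
  exact (key g hg).trans (ha ▸ degree_C_le)
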